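/- If G is a strong k-chromatic-choosable graph (k ≥ 2), then for any natural number p, the join G ∨ K_p is strong (k+p)-chromatic-choosable. -/

import Mathlib

open SimpleGraph Finset

section ListColoringDefs

variable {V : Type*}

/-- `f` is a proper coloring of `G` choosing each color from the list `L v`. -/
def IsProperListColoring (G : SimpleGraph V) (L : V → Finset ℕ) (f : V → ℕ) : Prop :=
  (∀ v, f v ∈ L v) ∧ ∀ u v, G.Adj u v → f u ≠ f v

/-- `G` admits a proper coloring from the list assignment `L`. -/
def ListColorable (G : SimpleGraph V) (L : V → Finset ℕ) : Prop :=
  ∃ f, IsProperListColoring G L f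

/-- `G` is colorable from every list assignment with lists of size at least `m`. -/
def Choosable (G : SimpleGraph V) (m : ℕ) : Prop :=
  ∀ L : V → Finset ℕ, (∀ v, m ≤ (L v).card) → ListColorable G L

/-- The list chromatic number of `G`. -/
noncomputable def listChromaticNumber (G : SimpleGraph V) : ℕ :=
  sInf { m | Choosable G m }

/-- `G` is strong `k`-chromatic-choosable: `χ(G) = k` and every `(k-1)`-assignment
from which `G` is not colorable is constant. -/
def StrongCC (G : SimpleGraph V) (k : ℕ) : Prop :=
  G.chromaticNumber = (k : ℕ∞) ∧
    ∀ L : V → Finset ℕ, (∀ v, (L v).card = k - 1) → ¬ ListColorable G L →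
      ∀ u v : V, L u = L v

/-- The number of proper `L`-colorings of `G`. -/
noncomputable def numColorings (G : SimpleGraph V) (L : V → Finset ℕ) : ℕ :=
  Set.ncard { f : V → ℕ | IsProperListColoring G L f }

/-- The list color function `P_ℓ(G,k)`: the minimum number of proper `L`-colorings
over all `k`-assignments `L`. -/
noncomputable def listColorFunction (G : SimpleGraph V) (k : ℕ) : ℕ :=
  sInf { n | ∃ L : V → Finset ℕ, (∀ v, (L v).card = k) ∧ n = numColorings G L }

/-- The chromatic polynomial `P(G,k)`: the number of proper colorings with colors
from `{0, …, k-1}`. -/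
noncomputable def chromPoly (G : SimpleGraph V) (k : ℕ) : ℕ :=
  numColorings G (fun _ => Finset.range k)

/-- The join `G ∨ K_p` of `G` with the complete graph on `p` vertices. -/
def joinK (G : SimpleGraph V) (p : ℕ) : SimpleGraph (V ⊕ Fin p) :=
  SimpleGraph.fromRel (fun a b =>
    match a, b with
    | Sum.inl u, Sum.inl v => G.Adj u v
    | _, _ => True)

/-- The star `K_{1,s}`: center `none` adjacent to the `s` leaves. -/
def starGraph (s : ℕ) : SimpleGraph (Option (Fin s)) :=
  SimpleGraph.fromRel (fun a _ => a = none)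

/-- The cycle graph `C_n` on `Fin n` (for `n ≥ 3`). -/
def cycGraph (n : ℕ) : SimpleGraph (Fin n) :=
  SimpleGraph.fromRel (fun a b => b.val = (a.val + 1) % n)

end ListColoringDefs

section Aux

variable {V : Type*} {W : Type*}

lemma joinK_adj_inl_inl {G : SimpleGraph V} {p : ℕ} {u v : V} :
    (joinK G p).Adj (Sum.inl u) (Sum.inl v) ↔ G.Adj u v := by
  simp only [joinK, SimpleGraph.fromRel_adj]
  constructor
  · rintro ⟨-, h | h⟩
    · exact h
    · exact h.symm
  · exact fun h => ⟨by simpa using h.ne, Or.inl h⟩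

lemma joinK_adj_inl_inr {G : SimpleGraph V} {p : ℕ} {u : V} {i : Fin p} :
    (joinK G p).Adj (Sum.inl u) (Sum.inr i) := by
  simp only [joinK, SimpleGraph.fromRel_adj]
  exact ⟨by simp, Or.inl trivial⟩

lemma joinK_adj_inr_inl {G : SimpleGraph V} {p : ℕ} {u : V} {i : Fin p} :
    (joinK G p).Adj (Sum.inr i) (Sum.inl u) := joinK_adj_inl_inr.symm

lemma joinK_adj_inr_inr {G : SimpleGraph V} {p : ℕ} {i j : Fin p} :
    (joinK G p).Adj (Sum.inr i) (Sum.inr j) ↔ i ≠ j := by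
  simp only [joinK, SimpleGraph.fromRel_adj]
  constructor
  · rintro ⟨h, -⟩; exact fun hij => h (by rw [hij])
  · exact fun h => ⟨by simpa using h, Or.inl trivial⟩

/-- Transport `StrongCC` along a graph isomorphism. -/
lemma strongCC_of_iso {G : SimpleGraph V} {H : SimpleGraph W} (e : G ≃g H) {k : ℕ}
    (h : StrongCC G k) : StrongCC H k := by
  constructor
  · have hset : Set.ofPred H.Colorable = Set.ofPred G.Colorable := by
      ext n
      simp only [Set.mem_ofPred_eq]
      exact ⟨fun hc => SimpleGraph.Colorable.of_hom e.toEmbedding.toHom hc,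
        fun hc => SimpleGraph.Colorable.of_hom e.symm.toEmbedding.toHom hc⟩
    rw [SimpleGraph.chromaticNumber_eq_biInf, hset, ← SimpleGraph.chromaticNumber_eq_biInf, h.1]
  · intro L hL hnc u v
    have hnc' : ¬ ListColorable G (fun x => L (e x)) := by
      rintro ⟨f, hf1, hf2⟩
      apply hnc
      refine ⟨fun w => f (e.symm w), fun w => by simpa using hf1 (e.symm w), ?_⟩
      intro a b hab hfe
      exact hf2 (e.symm a) (e.symm b) (by simpa using e.symm.map_rel_iff.mpr hab) hfe
    have := h.2 (fun x => L (e x)) (fun x => hL (e x)) hnc' (e.symm u) (e.symm v)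
    simpa using this

/-- The key step: joining with a single vertex. -/
lemma strongCC_joinOne {G : SimpleGraph V} {k : ℕ} (hk : 2 ≤ k) (h : StrongCC G k) :
    StrongCC (joinK G 1) (k + 1) := by
  -- G has an edge
  have hedge : ∃ x y : V, G.Adj x y := by
    by_contra h'
    push_neg at h'
    have hc1 : G.Colorable 1 :=
      ⟨SimpleGraph.Coloring.mk (fun _ => 0) (fun {u v} ha => absurd ha (h' u v))⟩
    have := hc1.chromaticNumber_le
    rw [h.1] at this
    have : k ≤ 1 := by exact_mod_cast this
    omega
  obtain ⟨x₀, y₀, hxy⟩ := hedge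
  constructor
  · -- chromatic number of the join is k + 1
    have hGcol : G.Colorable k := SimpleGraph.chromaticNumber_le_iff_colorable.mp (le_of_eq h.1)
    have hcol1 : (joinK G 1).Colorable (k + 1) := by
      obtain ⟨C⟩ := hGcol
      refine ⟨SimpleGraph.Coloring.mk
        (Sum.elim (fun v => (C v).castSucc) (fun _ => Fin.last k)) ?_⟩
      rintro (u | i) (v | j) hadj
      · simp only [Sum.elim_inl]
        intro hEq
        exact C.valid (joinK_adj_inl_inl.mp hadj) (Fin.castSucc_injective _ hEq)
      · simpa using (Fin.castSucc_lt_last (C u)).ne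
      · simpa using (Fin.castSucc_lt_last (C v)).ne'
      · exact absurd (congrArg Sum.inr (Subsingleton.elim i j)) hadj.ne
    have hncol : ¬ (joinK G 1).Colorable k := by
      rintro ⟨C⟩
      obtain ⟨m, rfl⟩ : ∃ m, k = m + 1 := ⟨k - 1, by omega⟩
      set c₀ := C (Sum.inr 0) with hc₀
      have hne : ∀ v : V, C (Sum.inl v) ≠ c₀ := fun v => C.valid joinK_adj_inl_inr
      have hs : ∀ v, ((finSuccEquiv' c₀) (C (Sum.inl v))).isSome := by
        intro v
        rw [Option.isSome_iff_ne_none]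
        intro h0
        have : (finSuccEquiv' c₀) (C (Sum.inl v)) = (finSuccEquiv' c₀) c₀ := by
          rw [h0, finSuccEquiv'_at]
        exact hne v ((finSuccEquiv' c₀).injective this)
      have hGm : G.Colorable m := by
        refine ⟨SimpleGraph.Coloring.mk
          (fun v => ((finSuccEquiv' c₀) (C (Sum.inl v))).get (hs v)) ?_⟩
        intro u v hadj hEq
        have heq2 : (finSuccEquiv' c₀) (C (Sum.inl u)) = (finSuccEquiv' c₀) (C (Sum.inl v)) := by
          rw [← Option.some_get (hs u), ← Option.some_get (hs v)]
          exact congrArg some hEq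
        exact C.valid (joinK_adj_inl_inl.mpr hadj) ((finSuccEquiv' c₀).injective heq2)
      have := hGm.chromaticNumber_le
      rw [h.1] at this
      have : m + 1 ≤ m := by exact_mod_cast this
      omega
    refine le_antisymm (by exact_mod_cast hcol1.chromaticNumber_le) ?_
    rw [Nat.cast_add, Nat.cast_one, ENat.add_one_le_iff (by simp)]
    rw [lt_iff_not_ge]
    intro hle
    exact hncol (SimpleGraph.chromaticNumber_le_iff_colorable.mp hle)
  · -- list condition
    classical
    intro L hcard hnc
    have hcard' : ∀ x, (L x).card = k := by
      intro x; have := hcard x; simpa using this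
    set w : V ⊕ Fin 1 := Sum.inr 0 with hw
    have key : ∀ c ∈ L w, (∀ v : V, c ∈ L (Sum.inl v)) ∧
        ∀ u v : V, (L (Sum.inl u)).erase c = (L (Sum.inl v)).erase c := by
      intro c hc
      set Lc : V → Finset ℕ := fun v => (L (Sum.inl v)).erase c with hLc
      have hnc' : ¬ ListColorable G Lc := by
        rintro ⟨f, hf1, hf2⟩
        apply hnc
        refine ⟨Sum.elim f (fun _ => c), ?_, ?_⟩
        · rintro (v | i)
          · exact Finset.erase_subset _ _ (hf1 v)
          · have : i = (0 : Fin 1) := Subsingleton.elim _ _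
            rw [this]; exact hc
        · rintro (a | i) (b | j) hadj
          · exact hf2 a b (joinK_adj_inl_inl.mp hadj)
          · simp only [Sum.elim_inl, Sum.elim_inr]
            exact Finset.ne_of_mem_erase (hf1 a)
          · simp only [Sum.elim_inl, Sum.elim_inr]
            exact (Finset.ne_of_mem_erase (hf1 b)).symm
          · exact absurd (congrArg Sum.inr (Subsingleton.elim i j)) hadj.ne
      have hsub : ∀ S : V → Finset ℕ, (∀ v, S v ⊆ Lc v) → (∀ v, (S v).card = k - 1) →
          ∀ u v, S u = S v := by
        intro S hS hScard
        refine h.2 S hScard ?_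
        rintro ⟨f, hf1, hf2⟩
        exact hnc' ⟨f, fun v => hS v (hf1 v), hf2⟩
      have hLcardle : ∀ v, k - 1 ≤ (Lc v).card := by
        intro v
        have h1 : (L (Sum.inl v)).card - 1 ≤ (Lc v).card := Finset.pred_card_le_card_erase
        rw [hcard'] at h1
        exact h1
      choose S hS1 hS2 using fun v => Finset.exists_subset_card_eq (s := Lc v) (n := k - 1) (hLcardle v)
      have hcLc : ∀ v, (Lc v).card = k - 1 := by
        intro v₀
        by_contra hne
        have hgt : k - 1 < (Lc v₀).card := lt_of_le_of_ne (hLcardle v₀) (Ne.symm hne)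
        obtain ⟨u₀, hu₀⟩ : ∃ u₀ : V, u₀ ≠ v₀ := by
          by_cases hx : x₀ = v₀
          · exact ⟨y₀, fun hy => G.ne_of_adj hxy (hx.trans hy.symm)⟩
          · exact ⟨x₀, hx⟩
        have hT : ∀ T : Finset ℕ, T ⊆ Lc v₀ → T.card = k - 1 → T = S u₀ := by
          intro T hTsub hTcard
          have hconst := hsub (fun v => if v = v₀ then T else S v)
            (fun v => by
              by_cases hv : v = v₀
              · subst hv; simpa only [if_pos rfl, ↓reduceIte] using hTsub
              · simpa only [if_neg hv] using hS1 v)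
            (fun v => by
              by_cases hv : v = v₀
              · subst hv; simpa only [if_pos rfl, ↓reduceIte] using hTcard
              · simpa only [if_neg hv] using hS2 v) v₀ u₀
          simpa [hu₀] using hconst
        have hSc : S v₀ = S u₀ := hsub S hS1 hS2 v₀ u₀
        have hnotin : ∀ a ∈ Lc v₀, a ∉ S u₀ := by
          intro a ha
          obtain ⟨T, hT1, hT2⟩ := Finset.exists_subset_card_eq (s := (Lc v₀).erase a) (n := k - 1)
            (by rw [Finset.card_erase_of_mem ha]; omega)
          have hTeq := hT T (hT1.trans (Finset.erase_subset _ _)) hT2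
          rw [← hTeq]
          intro haT
          exact Finset.ne_of_mem_erase (hT1 haT) rfl
        have hemp : S v₀ = ∅ := by
          rw [Finset.eq_empty_iff_forall_notMem]
          intro a haS
          exact hnotin a (hS1 v₀ haS) (hSc ▸ haS)
        have := hS2 v₀
        rw [hemp, Finset.card_empty] at this
        omega
      have hmem : ∀ v : V, c ∈ L (Sum.inl v) := by
        intro v
        by_contra hcm
        have heq : Lc v = L (Sum.inl v) := Finset.erase_eq_of_notMem hcm
        have := hcLc v
        rw [heq, hcard'] at this
        omega
      exact ⟨hmem, fun u v => h.2 Lc hcLc hnc' u v⟩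
    have hLw : (L w).Nonempty := by
      rw [← Finset.card_pos, hcard']; omega
    obtain ⟨c, hc⟩ := hLw
    have hVconst : ∀ u v : V, L (Sum.inl u) = L (Sum.inl v) := by
      intro u v
      calc L (Sum.inl u) = insert c ((L (Sum.inl u)).erase c) :=
            (Finset.insert_erase ((key c hc).1 u)).symm
        _ = insert c ((L (Sum.inl v)).erase c) := by rw [(key c hc).2 u v]
        _ = L (Sum.inl v) := Finset.insert_erase ((key c hc).1 v)
    have hWV : ∀ v : V, L w = L (Sum.inl v) := by
      intro v
      refine Finset.eq_of_subset_of_card_le (fun a ha => (key a ha).1 v) ?_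
      rw [hcard', hcard']
    rintro (u | i) (v | j)
    · exact hVconst u v
    · have : j = (0 : Fin 1) := Subsingleton.elim _ _
      rw [this]
      exact (hWV u).symm
    · have : i = (0 : Fin 1) := Subsingleton.elim _ _
      rw [this]
      exact hWV v
    · rw [Subsingleton.elim i j]

/-- `G` is isomorphic to `joinK G 0`. -/
def isoJoinZero (G : SimpleGraph V) : G ≃g joinK G 0 where
  toEquiv := (Equiv.sumEmpty V (Fin 0)).symm
  map_rel_iff' := by
    intro a b
    exact joinK_adj_inl_inl

/-- `joinK (joinK G p) 1` is isomorphic to `joinK G (p+1)`. -/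
def isoJoinSucc (G : SimpleGraph V) (p : ℕ) : joinK (joinK G p) 1 ≃g joinK G (p + 1) where
  toEquiv := (Equiv.sumAssoc V (Fin p) (Fin 1)).trans ((Equiv.refl V).sumCongr finSumFinEquiv)
  map_rel_iff' := by
    rintro ((u | i) | i) ((v | j) | j) <;>
      simp only [Equiv.trans_apply, Equiv.sumAssoc_apply_inl_inl, Equiv.sumAssoc_apply_inl_inr,
        Equiv.sumAssoc_apply_inr, Equiv.sumCongr_apply, Sum.map_inl, Sum.map_inr,
        Equiv.refl_apply, joinK_adj_inl_inl, joinK_adj_inl_inr, joinK_adj_inr_inl,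
        joinK_adj_inr_inr, iff_true, true_iff] <;>
      simp only [finSumFinEquiv_apply_left, finSumFinEquiv_apply_right, ne_eq,
        Fin.ext_iff, Fin.coe_castAdd, Fin.coe_natAdd]
    all_goals try omega
    all_goals (have h1 := i.isLt; have h2 := j.isLt; omega)

end Aux

/-- the join of a strong `k`-chromatic-choosable graph with `K_p`
is strong `(k+p)`-chromatic-choosable. -/
theorem stmt_2 {V : Type*} [Fintype V] (G : SimpleGraph V) (k : ℕ) (hk : 2 ≤ k)
    (h : StrongCC G k) (p : ℕ) : StrongCC (joinK G p) (k + p) := by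
  induction p with
  | zero => exact strongCC_of_iso (isoJoinZero G) h
  | succ p ih =>
    have h1 : StrongCC (joinK (joinK G p) 1) (k + p + 1) :=
      strongCC_joinOne (by omega) ih
    have h2 := strongCC_of_iso (isoJoinSucc G p) h1
    rwa [Nat.add_assoc] at h2
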